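/- Let A be a Banach algebra, let I be a closed ideal of A with a bounded approximate identity, let E be a pseudo-unital Banach I-bimodule, and let D : I → E* be a bounded derivation. Then the I-module actions on E extend canonically to A-module actions making E a Banach A-bimodule, and there is a bounded derivation D̃ : A → E* extending D which is continuous from the I-strict topology on A to the weak-* topology on E*. -/

import Mathlib

open Filter Topology NormedSpace

set_option maxHeartbeats 4000000 in
/-- Let `A` be a Banach algebra, `I` a closed (two-sided) ideal of `A` with a
bounded approximate identity, `E` a pseudo-unital Banach `I`-bimodule (with actions `li`, `ri`),
and `D : I → E⋆` a bounded derivation.  Then the module actions extend canonically to `A`, making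
`E` a Banach `A`-bimodule, and there is a bounded derivation `D' : A → E⋆` extending `D` which is
continuous from the `I`-strict topology on `A` to the weak-* topology on `E⋆`. -/
theorem statement1 (A : Type) [NonUnitalNormedRing A] [NormedSpace ℂ A]
    [IsScalarTower ℂ A A] [SMulCommClass ℂ A A] [CompleteSpace A]
    (I : NonUnitalSubalgebra ℂ A) (hclosed : IsClosed (I : Set A))
    (hideal : ∀ a : A, ∀ x ∈ I, a * x ∈ I ∧ x * a ∈ I)
    -- `I` has a bounded approximate identity:
    (hbai : ∃ (ι : Type) (F : Filter ι) (e : ι → I), F.NeBot ∧ (∃ C, ∀ i, ‖e i‖ ≤ C) ∧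
      ∀ x : I, Tendsto (fun i => e i * x) F (𝓝 x) ∧ Tendsto (fun i => x * e i) F (𝓝 x))
    (E : Type) [NormedAddCommGroup E] [NormedSpace ℂ E] [CompleteSpace E]
    -- the Banach `I`-bimodule structure on `E`:
    (li ri : I →L[ℂ] E →L[ℂ] E)
    (hl : ∀ x y : I, ∀ v, li (x * y) v = li x (li y v))
    (hr : ∀ x y : I, ∀ v, ri (x * y) v = ri y (ri x v))
    (hlr : ∀ x y : I, ∀ v, li x (ri y v) = ri y (li x v))
    -- pseudo-unitality:
    (hpu : ∀ v : E, ∃ (x y : I) (w : E), v = li x (ri y w))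
    -- the derivation:
    (D : I →L[ℂ] StrongDual ℂ E)
    (hD : ∀ x y : I, ∀ v, D (x * y) v = D x (li y v) + D y (ri x v)) :
    ∃ (L R : A →L[ℂ] E →L[ℂ] E) (D' : A →L[ℂ] StrongDual ℂ E),
      -- `L`, `R` make `E` a Banach `A`-bimodule …
      (∀ a b : A, ∀ v, L (a * b) v = L a (L b v)) ∧
      (∀ a b : A, ∀ v, R (a * b) v = R b (R a v)) ∧
      (∀ a b : A, ∀ v, L a (R b v) = R b (L a v)) ∧
      -- … extending the `I`-actions canonically:
      (∀ x : I, ∀ v, L (x : A) v = li x v ∧ R (x : A) v = ri x v) ∧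
      (∀ a : A, ∀ x : I, ∀ v, L a (li x v) = li ⟨a * (x : A), (hideal a x x.2).1⟩ v) ∧
      (∀ a : A, ∀ x : I, ∀ v, R a (ri x v) = ri ⟨(x : A) * a, (hideal a x x.2).2⟩ v) ∧
      -- `D'` is a derivation extending `D` …
      (∀ x : I, D' (x : A) = D x) ∧
      (∀ a b : A, ∀ v, D' (a * b) v = D' a (L b v) + D' b (R a v)) ∧
      -- … which is `I`-strict-to-weak-* continuous:
      (∀ (κ : Type) (F : Filter κ) (f : κ → A) (a : A),
        (∀ x : I, Tendsto (fun i => f i * (x : A)) F (𝓝 (a * x)) ∧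
          Tendsto (fun i => (x : A) * f i) F (𝓝 ((x : A) * a))) →
        ∀ v : E, Tendsto (fun i => D' (f i) v) F (𝓝 (D' a v))) := by
  classical
  letI : NormedSpace ℂ I := { (inferInstance : Module ℂ I) with norm_smul_le := fun c x => norm_smul_le c (x : A) }
  obtain ⟨ι, F, e, hFne, ⟨C, hC⟩, hei⟩ := hbai
  haveI := hFne
  have memL : ∀ (a : A) (z : I), a * (z : A) ∈ I := fun a z => (hideal a z z.2).1
  have memR : ∀ (a : A) (z : I), (z : A) * a ∈ I := fun a z => (hideal a z z.2).2
  have tI : ∀ {κ : Type} {G : Filter κ} {g : κ → I} {c : I},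
      Tendsto (fun i => ((g i : A))) G (𝓝 (c : A)) → Tendsto g G (𝓝 c) :=
    fun h => tendsto_subtype_rng.mpr h
  have tA : ∀ {κ : Type} {G : Filter κ} {g : κ → I} {c : I},
      Tendsto g G (𝓝 c) → Tendsto (fun i => ((g i : A))) G (𝓝 (c : A)) :=
    fun h => tendsto_subtype_rng.mp h
  have tLi : ∀ {κ : Type} {G : Filter κ} {g : κ → I} {c : I},
      Tendsto g G (𝓝 c) → ∀ u, Tendsto (fun i => li (g i) u) G (𝓝 (li c u)) :=
    fun h u => ((show Continuous (fun x : I => li x u) by fun_prop).tendsto _).comp h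
  have tRi : ∀ {κ : Type} {G : Filter κ} {g : κ → I} {c : I},
      Tendsto g G (𝓝 c) → ∀ u, Tendsto (fun i => ri (g i) u) G (𝓝 (ri c u)) :=
    fun h u => ((show Continuous (fun x : I => ri x u) by fun_prop).tendsto _).comp h
  have tD : ∀ {κ : Type} {G : Filter κ} {g : κ → I} {c : I},
      Tendsto g G (𝓝 c) → ∀ u, Tendsto (fun i => D (g i) u) G (𝓝 (D c u)) :=
    fun h u => ((show Continuous (fun x : I => D x u) by fun_prop).tendsto _).comp h
  have heix : ∀ x : I, Tendsto (fun i => ((e i * x : I) : A)) F (𝓝 (x : A)) := fun x => tA (hei x).1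
  have hxei : ∀ x : I, Tendsto (fun i => ((x * e i : I) : A)) F (𝓝 (x : A)) := fun x => tA (hei x).2
  -- key coercion-level tendsto facts
  have hzx : ∀ (a : A) (x : I), Tendsto (fun i => ((⟨a * (e i : A), memL a (e i)⟩ : I) * x)) F
      (𝓝 (⟨a * (x : A), memL a x⟩ : I)) := by
    intro a x
    apply tI
    simpa only [MulMemClass.coe_mul, mul_assoc] using ((heix x).const_mul a)
  have hyz : ∀ (a : A) (y : I), Tendsto (fun i => (y * (⟨(e i : A) * a, memR a (e i)⟩ : I))) F
      (𝓝 (⟨(y : A) * a, memR a y⟩ : I)) := by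
    intro a y
    apply tI
    simpa only [MulMemClass.coe_mul, mul_assoc] using ((hxei y).mul_const a)
  have hyz' : ∀ (a : A) (y : I), Tendsto (fun i => (y * (⟨a * (e i : A), memL a (e i)⟩ : I))) F
      (𝓝 (⟨(y : A) * a, memR a y⟩ : I)) := by
    intro a y
    apply tI
    simpa only [MulMemClass.coe_mul, mul_assoc] using (tA (hei ⟨(y:A) * a, memR a y⟩).2)
  -- approximate identity acts approximately on E
  have heE' : ∀ v : E, Tendsto (fun i => ri (e i) v) F (𝓝 v) := by
    intro v
    obtain ⟨x, y, w, rfl⟩ := hpu v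
    have h2 := tRi (hei y).2 w
    have h3 : Tendsto (fun i => ri (e i) (ri y w)) F (𝓝 (ri y w)) := by
      simpa only [hr] using h2
    have h4 := ((li x).continuous.tendsto _).comp h3
    simpa only [Function.comp_def, hlr] using h4
  have heE : ∀ v : E, Tendsto (fun i => li (e i) v) F (𝓝 v) := by
    intro v
    obtain ⟨x, y, w, rfl⟩ := hpu v
    have h2 := tLi (hei x).1 (ri y w)
    simpa only [hl] using h2
  -- existence of the limits defining L, R, D'
  have exL : ∀ (a : A) (v : E), ∃ c, Tendsto (fun i => li ⟨a * (e i : A), memL a (e i)⟩ v) F (𝓝 c) := by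
    intro a v
    obtain ⟨x, y, w, rfl⟩ := hpu v
    refine ⟨li ⟨a * (x : A), memL a x⟩ (ri y w), ?_⟩
    simpa only [hl] using tLi (hzx a x) (ri y w)
  have exR : ∀ (a : A) (v : E), ∃ c, Tendsto (fun i => ri ⟨(e i : A) * a, memR a (e i)⟩ v) F (𝓝 c) := by
    intro a v
    obtain ⟨x, y, w, rfl⟩ := hpu v
    refine ⟨li x (ri ⟨(y : A) * a, memR a y⟩ w), ?_⟩
    have h3 := ((li x).continuous.tendsto _).comp (tRi (hyz a y) w)
    simpa only [Function.comp_def, hr, hlr] using h3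
  have exD : ∀ (a : A) (v : E), ∃ c : ℂ, Tendsto (fun i => D ⟨a * (e i : A), memL a (e i)⟩ v) F (𝓝 c) := by
    intro a v
    obtain ⟨x, y, w, rfl⟩ := hpu v
    refine ⟨D ⟨a * (x : A), memL a x⟩ (ri y w) - D x (ri ⟨(y : A) * a, memR a y⟩ w), ?_⟩
    have hfirst := tD (hzx a x) (ri y w)
    have hsecond := ((D x).continuous.tendsto _).comp (tRi (hyz' a y) w)
    have h3 := hfirst.sub hsecond
    have heq : ∀ z : I, D z (li x (ri y w))
        = D (z * x) (ri y w) - D x (ri z (ri y w)) := fun z =>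
      eq_sub_of_add_eq (hD z x (ri y w)).symm
    simp only [heq]
    simpa only [Function.comp_def, hr] using h3
  -- define the extended actions and derivation as limits
  obtain ⟨L0, hL0⟩ : ∃ L0 : A → E → E,
      ∀ a v, Tendsto (fun i => li ⟨a * (e i : A), memL a (e i)⟩ v) F (𝓝 (L0 a v)) :=
    ⟨fun a v => (exL a v).choose, fun a v => (exL a v).choose_spec⟩
  obtain ⟨R0, hR0⟩ : ∃ R0 : A → E → E,
      ∀ a v, Tendsto (fun i => ri ⟨(e i : A) * a, memR a (e i)⟩ v) F (𝓝 (R0 a v)) :=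
    ⟨fun a v => (exR a v).choose, fun a v => (exR a v).choose_spec⟩
  obtain ⟨D0, hD0⟩ : ∃ D0 : A → E → ℂ,
      ∀ a v, Tendsto (fun i => D ⟨a * (e i : A), memL a (e i)⟩ v) F (𝓝 (D0 a v)) :=
    ⟨fun a v => (exD a v).choose, fun a v => (exD a v).choose_spec⟩
  -- closed forms
  have hF1 : ∀ (a : A) (x : I) (u : E), L0 a (li x u) = li ⟨a * (x : A), memL a x⟩ u := by
    intro a x u
    refine tendsto_nhds_unique (hL0 a (li x u)) ?_
    simpa only [hl] using tLi (hzx a x) u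
  have hF2 : ∀ (a : A) (y : I) (w : E), R0 a (ri y w) = ri ⟨(y : A) * a, memR a y⟩ w := by
    intro a y w
    refine tendsto_nhds_unique (hR0 a (ri y w)) ?_
    simpa only [hr] using tRi (hyz a y) w
  have hF3 : ∀ (a : A) (x : I) (u : E), R0 a (li x u) = li x (R0 a u) := by
    intro a x u
    refine tendsto_nhds_unique (hR0 a (li x u)) ?_
    have h := ((li x).continuous.tendsto _).comp (hR0 a u)
    simpa only [Function.comp_def, hlr] using h
  have hG : ∀ (a : A) (u : E), Tendsto (fun i => ri ⟨a * (e i : A), memL a (e i)⟩ u) F (𝓝 (R0 a u)) := by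
    intro a u
    obtain ⟨x, y, w, rfl⟩ := hpu u
    rw [hF3, hF2]
    have h3 := ((li x).continuous.tendsto _).comp (tRi (hyz' a y) w)
    simpa only [Function.comp_def, hr, hlr] using h3
  have hF4 : ∀ (a : A) (x : I) (u : E),
      D0 a (li x u) = D ⟨a * (x : A), memL a x⟩ u - D x (R0 a u) := by
    intro a x u
    refine tendsto_nhds_unique (hD0 a (li x u)) ?_
    have h1 := tD (hzx a x) u
    have h2 := ((D x).continuous.tendsto _).comp (hG a u)
    have h3 := h1.sub h2
    have heq : ∀ z : I, D z (li x u) = D (z * x) u - D x (ri z u) := fun z =>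
      eq_sub_of_add_eq (hD z x u).symm
    simp only [heq]
    simpa only [Function.comp_def] using h3
  -- subtype-congruence helpers
  have liext : ∀ (p q : A) (h1 : p ∈ I) (h2 : q ∈ I), p = q → ∀ u, li ⟨p, h1⟩ u = li ⟨q, h2⟩ u := by
    rintro p q h1 h2 rfl u; rfl
  have riext : ∀ (p q : A) (h1 : p ∈ I) (h2 : q ∈ I), p = q → ∀ u, ri ⟨p, h1⟩ u = ri ⟨q, h2⟩ u := by
    rintro p q h1 h2 rfl u; rfl
  have Dext : ∀ (p q : A) (h1 : p ∈ I) (h2 : q ∈ I), p = q → ∀ u, D ⟨p, h1⟩ u = D ⟨q, h2⟩ u := by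
    rintro p q h1 h2 rfl u; rfl
  -- algebraic properties
  have pL : ∀ a b : A, ∀ v, L0 (a * b) v = L0 a (L0 b v) := by
    intro a b v
    obtain ⟨x, y, w, rfl⟩ := hpu v
    rw [hF1, hF1, hF1]
    exact liext _ _ _ _ (mul_assoc a b (x : A)) _
  have pR : ∀ a b : A, ∀ v, R0 (a * b) v = R0 b (R0 a v) := by
    intro a b v
    obtain ⟨x, y, w, rfl⟩ := hpu v
    rw [hF3, hF2, hF3, hF2, hF3, hF2]
    exact congrArg _ (riext _ _ _ _ (mul_assoc (y : A) a b).symm _)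
  have pC : ∀ a b : A, ∀ v, L0 a (R0 b v) = R0 b (L0 a v) := by
    intro a b v
    obtain ⟨x, y, w, rfl⟩ := hpu v
    rw [hF3, hF2, hF1, hF1, hF3, hF2]
  have pExtL : ∀ x : I, ∀ v, L0 (x : A) v = li x v := by
    intro x v
    obtain ⟨x', y, w, rfl⟩ := hpu v
    rw [hF1, show (⟨(x : A) * ((x' : I) : A), memL (x : A) x'⟩ : I) = x * x' from rfl, hl]
  have pExtR : ∀ x : I, ∀ v, R0 (x : A) v = ri x v := by
    intro x v
    obtain ⟨x', y, w, rfl⟩ := hpu v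
    rw [hF3, hF2, show (⟨((y : I) : A) * (x : A), memR (x : A) y⟩ : I) = y * x from rfl, hr, hlr]
  have pDext : ∀ x : I, ∀ v, D0 (x : A) v = D x v := by
    intro x v
    obtain ⟨x', y, w, rfl⟩ := hpu v
    rw [hF4, show (⟨(x : A) * ((x' : I) : A), memL (x : A) x'⟩ : I) = x * x' from rfl]
    have hRu : R0 (x : A) (ri y w) = ri x (ri y w) := pExtR x (ri y w)
    rw [hRu, hD x x' (ri y w)]
    ring
  have pDer : ∀ a b : A, ∀ v, D0 (a * b) v = D0 a (L0 b v) + D0 b (R0 a v) := by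
    intro a b v
    obtain ⟨x, y, w, rfl⟩ := hpu v
    rw [hF1 b, hF3 a, hF4, hF4, hF4, pR a b (ri y w)]
    rw [Dext (a * ((⟨b * (x : A), memL b x⟩ : I) : A)) ((a * b) * (x : A))
      (memL a ⟨b * (x : A), memL b x⟩) (memL (a * b) x) (mul_assoc a b (x : A)).symm]
    ring
  -- strict-to-weak-* continuity
  have pCont : ∀ (κ : Type) (G : Filter κ) (f : κ → A) (a : A),
      (∀ x : I, Tendsto (fun i => f i * (x : A)) G (𝓝 (a * x)) ∧
        Tendsto (fun i => (x : A) * f i) G (𝓝 ((x : A) * a))) →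
      ∀ v : E, Tendsto (fun i => D0 (f i) v) G (𝓝 (D0 a v)) := by
    intro κ G f a hf v
    obtain ⟨x, y, w, rfl⟩ := hpu v
    have form : ∀ b : A, D0 b (li x (ri y w))
        = D ⟨b * (x : A), memL b x⟩ (ri y w) - D x (ri ⟨(y : A) * b, memR b y⟩ w) := by
      intro b; rw [hF4, hF2]
    simp only [form]
    refine Tendsto.sub ?_ ?_
    · exact tD (tI (hf x).1) (ri y w)
    · exact ((D x).continuous.tendsto _).comp (tRi (tI (hf y).2) w)
  -- bilinearity of L0, R0, D0
  have hC0 : 0 ≤ C := le_trans (norm_nonneg _) (hC (Filter.nonempty_of_neBot F).some)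
  have laddA : ∀ (a b : A) (v : E), L0 (a + b) v = L0 a v + L0 b v := by
    intro a b v
    refine tendsto_nhds_unique (hL0 (a + b) v) ?_
    have key : ∀ i, li (⟨(a + b) * (e i : A), memL (a + b) (e i)⟩ : I) v
        = li ⟨a * (e i : A), memL a (e i)⟩ v + li ⟨b * (e i : A), memL b (e i)⟩ v := by
      intro i
      rw [show (⟨(a + b) * (e i : A), memL (a + b) (e i)⟩ : I)
          = ⟨a * (e i : A), memL a (e i)⟩ + ⟨b * (e i : A), memL b (e i)⟩ from
        Subtype.ext (add_mul a b _), map_add, ContinuousLinearMap.add_apply]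
    simp only [key]
    exact (hL0 a v).add (hL0 b v)
  have lsmulA : ∀ (c : ℂ) (a : A) (v : E), L0 (c • a) v = c • L0 a v := by
    intro c a v
    refine tendsto_nhds_unique (hL0 (c • a) v) ?_
    have key : ∀ i, li (⟨(c • a) * (e i : A), memL (c • a) (e i)⟩ : I) v
        = c • li ⟨a * (e i : A), memL a (e i)⟩ v := by
      intro i
      rw [show (⟨(c • a) * (e i : A), memL (c • a) (e i)⟩ : I)
          = c • (⟨a * (e i : A), memL a (e i)⟩ : I) from
        Subtype.ext (smul_mul_assoc c a _), map_smul, ContinuousLinearMap.smul_apply]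
    simp only [key]
    exact (hL0 a v).const_smul c
  have laddV : ∀ (a : A) (v w' : E), L0 a (v + w') = L0 a v + L0 a w' := by
    intro a v w'
    refine tendsto_nhds_unique (hL0 a (v + w')) ?_
    simpa only [map_add] using (hL0 a v).add (hL0 a w')
  have lsmulV : ∀ (a : A) (c : ℂ) (v : E), L0 a (c • v) = c • L0 a v := by
    intro a c v
    refine tendsto_nhds_unique (hL0 a (c • v)) ?_
    simpa only [map_smul] using (hL0 a v).const_smul c
  have bndL : ∀ (a : A) (v : E), ‖L0 a v‖ ≤ (‖li‖ * C) * ‖a‖ * ‖v‖ := by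
    intro a v
    refine le_of_tendsto (hL0 a v).norm (Eventually.of_forall fun i => ?_)
    have h1 : ‖(⟨a * (e i : A), memL a (e i)⟩ : I)‖ ≤ ‖a‖ * C := by
      refine le_trans (norm_mul_le a ((e i : I) : A)) ?_
      exact mul_le_mul_of_nonneg_left (hC i) (norm_nonneg a)
    calc ‖li ⟨a * (e i : A), memL a (e i)⟩ v‖
        ≤ ‖li‖ * ‖(⟨a * (e i : A), memL a (e i)⟩ : I)‖ * ‖v‖ := li.le_opNorm₂ _ _
      _ ≤ ‖li‖ * (‖a‖ * C) * ‖v‖ := by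
          refine mul_le_mul_of_nonneg_right ?_ (norm_nonneg v)
          exact mul_le_mul_of_nonneg_left h1 (norm_nonneg li)
      _ = (‖li‖ * C) * ‖a‖ * ‖v‖ := by ring
  have raddA : ∀ (a b : A) (v : E), R0 (a + b) v = R0 a v + R0 b v := by
    intro a b v
    refine tendsto_nhds_unique (hR0 (a + b) v) ?_
    have key : ∀ i, ri (⟨(e i : A) * (a + b), memR (a + b) (e i)⟩ : I) v
        = ri ⟨(e i : A) * a, memR a (e i)⟩ v + ri ⟨(e i : A) * b, memR b (e i)⟩ v := by
      intro i
      rw [show (⟨(e i : A) * (a + b), memR (a + b) (e i)⟩ : I)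
          = ⟨(e i : A) * a, memR a (e i)⟩ + ⟨(e i : A) * b, memR b (e i)⟩ from
        Subtype.ext (mul_add _ a b), map_add, ContinuousLinearMap.add_apply]
    simp only [key]
    exact (hR0 a v).add (hR0 b v)
  have rsmulA : ∀ (c : ℂ) (a : A) (v : E), R0 (c • a) v = c • R0 a v := by
    intro c a v
    refine tendsto_nhds_unique (hR0 (c • a) v) ?_
    have key : ∀ i, ri (⟨(e i : A) * (c • a), memR (c • a) (e i)⟩ : I) v
        = c • ri ⟨(e i : A) * a, memR a (e i)⟩ v := by
      intro i
      rw [show (⟨(e i : A) * (c • a), memR (c • a) (e i)⟩ : I)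
          = c • (⟨(e i : A) * a, memR a (e i)⟩ : I) from
        Subtype.ext (mul_smul_comm c _ a), map_smul, ContinuousLinearMap.smul_apply]
    simp only [key]
    exact (hR0 a v).const_smul c
  have raddV : ∀ (a : A) (v w' : E), R0 a (v + w') = R0 a v + R0 a w' := by
    intro a v w'
    refine tendsto_nhds_unique (hR0 a (v + w')) ?_
    simpa only [map_add] using (hR0 a v).add (hR0 a w')
  have rsmulV : ∀ (a : A) (c : ℂ) (v : E), R0 a (c • v) = c • R0 a v := by
    intro a c v
    refine tendsto_nhds_unique (hR0 a (c • v)) ?_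
    simpa only [map_smul] using (hR0 a v).const_smul c
  have bndR : ∀ (a : A) (v : E), ‖R0 a v‖ ≤ (‖ri‖ * C) * ‖a‖ * ‖v‖ := by
    intro a v
    refine le_of_tendsto (hR0 a v).norm (Eventually.of_forall fun i => ?_)
    have h1 : ‖(⟨(e i : A) * a, memR a (e i)⟩ : I)‖ ≤ ‖a‖ * C := by
      refine le_trans (norm_mul_le ((e i : I) : A) a) ?_
      rw [mul_comm]
      exact mul_le_mul_of_nonneg_left (hC i) (norm_nonneg a)
    calc ‖ri ⟨(e i : A) * a, memR a (e i)⟩ v‖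
        ≤ ‖ri‖ * ‖(⟨(e i : A) * a, memR a (e i)⟩ : I)‖ * ‖v‖ := ri.le_opNorm₂ _ _
      _ ≤ ‖ri‖ * (‖a‖ * C) * ‖v‖ := by
          refine mul_le_mul_of_nonneg_right ?_ (norm_nonneg v)
          exact mul_le_mul_of_nonneg_left h1 (norm_nonneg ri)
      _ = (‖ri‖ * C) * ‖a‖ * ‖v‖ := by ring
  have daddA : ∀ (a b : A) (v : E), D0 (a + b) v = D0 a v + D0 b v := by
    intro a b v
    refine tendsto_nhds_unique (hD0 (a + b) v) ?_
    have key : ∀ i, D (⟨(a + b) * (e i : A), memL (a + b) (e i)⟩ : I) v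
        = D ⟨a * (e i : A), memL a (e i)⟩ v + D ⟨b * (e i : A), memL b (e i)⟩ v := by
      intro i
      rw [show (⟨(a + b) * (e i : A), memL (a + b) (e i)⟩ : I)
          = ⟨a * (e i : A), memL a (e i)⟩ + ⟨b * (e i : A), memL b (e i)⟩ from
        Subtype.ext (add_mul a b _), map_add, ContinuousLinearMap.add_apply]
    simp only [key]
    exact (hD0 a v).add (hD0 b v)
  have dsmulA : ∀ (c : ℂ) (a : A) (v : E), D0 (c • a) v = c • D0 a v := by
    intro c a v
    refine tendsto_nhds_unique (hD0 (c • a) v) ?_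
    have key : ∀ i, D (⟨(c • a) * (e i : A), memL (c • a) (e i)⟩ : I) v
        = c • D ⟨a * (e i : A), memL a (e i)⟩ v := by
      intro i
      rw [show (⟨(c • a) * (e i : A), memL (c • a) (e i)⟩ : I)
          = c • (⟨a * (e i : A), memL a (e i)⟩ : I) from
        Subtype.ext (smul_mul_assoc c a _), map_smul, ContinuousLinearMap.smul_apply]
    simp only [key]
    exact (hD0 a v).const_smul c
  have daddV : ∀ (a : A) (v w' : E), D0 a (v + w') = D0 a v + D0 a w' := by
    intro a v w'
    refine tendsto_nhds_unique (hD0 a (v + w')) ?_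
    simpa only [map_add] using (hD0 a v).add (hD0 a w')
  have dsmulV : ∀ (a : A) (c : ℂ) (v : E), D0 a (c • v) = c • D0 a v := by
    intro a c v
    refine tendsto_nhds_unique (hD0 a (c • v)) ?_
    simpa only [map_smul] using (hD0 a v).const_smul c
  have bndD : ∀ (a : A) (v : E), ‖D0 a v‖ ≤ (‖D‖ * C) * ‖a‖ * ‖v‖ := by
    intro a v
    refine le_of_tendsto (hD0 a v).norm (Eventually.of_forall fun i => ?_)
    have h1 : ‖(⟨a * (e i : A), memL a (e i)⟩ : I)‖ ≤ ‖a‖ * C := by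
      refine le_trans (norm_mul_le a ((e i : I) : A)) ?_
      exact mul_le_mul_of_nonneg_left (hC i) (norm_nonneg a)
    calc ‖D ⟨a * (e i : A), memL a (e i)⟩ v‖
        ≤ ‖D‖ * ‖(⟨a * (e i : A), memL a (e i)⟩ : I)‖ * ‖v‖ := D.le_opNorm₂ _ _
      _ ≤ ‖D‖ * (‖a‖ * C) * ‖v‖ := by
          refine mul_le_mul_of_nonneg_right ?_ (norm_nonneg v)
          exact mul_le_mul_of_nonneg_left h1 (norm_nonneg D)
      _ = (‖D‖ * C) * ‖a‖ * ‖v‖ := by ring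
  -- assemble the continuous linear maps
  refine ⟨LinearMap.mkContinuous₂ (LinearMap.mk₂ ℂ L0 laddA lsmulA laddV
      (fun c a v => lsmulV a c v)) (‖li‖ * C) bndL,
    LinearMap.mkContinuous₂ (LinearMap.mk₂ ℂ R0 raddA rsmulA raddV
      (fun c a v => rsmulV a c v)) (‖ri‖ * C) bndR,
    LinearMap.mkContinuous₂ (LinearMap.mk₂ ℂ D0 daddA dsmulA daddV
      (fun c a v => dsmulV a c v)) (‖D‖ * C) bndD,
    pL, pR, pC, fun x v => ⟨pExtL x v, pExtR x v⟩, hF1, hF2,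
    fun x => ContinuousLinearMap.ext fun v => pDext x v, pDer, pCont⟩
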